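/- Let p and q be distinct primes with q ≡ 3 (mod 8), and let r be an integer with q dividing r² + p. In the quaternion algebra B = ℍ(−p, −q), for all integers x, y, z, the reduced norm of the element v = x·β + y·(α + αβ) + (z/q)·(rβ + αβ) equals q(x − ry)² + ((r² + p)/q)(z + qy)² + p·y² + 2r(x − ry)(z + qy). -/

import Mathlib

open Quaternion

/-- The reduced trace of a quaternion: `tr v = v + star v` (as a scalar). -/
def trd {c₁ c₂ : ℚ} (v : ℍ[ℚ, c₁, c₂]) : ℚ := (v + star v).re

/-- The reduced norm of a quaternion: `nrd v = v * star v` (as a scalar). -/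
def nrd {c₁ c₂ : ℚ} (v : ℍ[ℚ, c₁, c₂]) : ℚ := (v * star v).re

theorem reduced_norm_formula (p q : ℕ) (hp : p.Prime) (hq : q.Prime) (hpq : p ≠ q)
    (hq8 : q % 8 = 3) (r : ℤ) (hdvd : (q : ℤ) ∣ r ^ 2 + (p : ℤ)) (x y z : ℤ) :
    letI α : ℍ[ℚ, -(p : ℚ), -(q : ℚ)] := ⟨0, 1, 0, 0⟩
    letI β : ℍ[ℚ, -(p : ℚ), -(q : ℚ)] := ⟨0, 0, 1, 0⟩
    letI v : ℍ[ℚ, -(p : ℚ), -(q : ℚ)] :=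
      (x : ℚ) • β + (y : ℚ) • (α + α * β) + ((z : ℚ) / (q : ℚ)) • ((r : ℚ) • β + α * β)
    nrd v = (q : ℚ) * ((x : ℚ) - (r : ℚ) * (y : ℚ)) ^ 2 +
      (((r : ℚ) ^ 2 + (p : ℚ)) / (q : ℚ)) * ((z : ℚ) + (q : ℚ) * (y : ℚ)) ^ 2 +
      (p : ℚ) * (y : ℚ) ^ 2 +
      2 * (r : ℚ) * ((x : ℚ) - (r : ℚ) * (y : ℚ)) * ((z : ℚ) + (q : ℚ) * (y : ℚ)) := by
  have hq0 : (q : ℚ) ≠ 0 := Nat.cast_ne_zero.mpr hq.ne_zero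
  simp only [nrd, QuaternionAlgebra.re_mul, QuaternionAlgebra.re_add,
    QuaternionAlgebra.imI_add, QuaternionAlgebra.imJ_add, QuaternionAlgebra.imK_add,
    QuaternionAlgebra.re_smul, QuaternionAlgebra.imI_smul, QuaternionAlgebra.imJ_smul,
    QuaternionAlgebra.imK_smul, QuaternionAlgebra.re_star, QuaternionAlgebra.imI_star,
    QuaternionAlgebra.imJ_star, QuaternionAlgebra.imK_star, smul_eq_mul,
    QuaternionAlgebra.imI_mul, QuaternionAlgebra.imJ_mul, QuaternionAlgebra.imK_mul]
  field_simp
  ring
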